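/- arXiv:2507.07041 — 4 statements merged into one kernel-verified Lean document; each statement's English description precedes it below -/
import Mathlib

section
/- Parallel composition for local differential privacy: let M_1, …, M_n be Markov kernels, where M_i maps a measurable space 𝒳 to a measurable space ℛ_i and satisfies (ε_i, δ_i)-LDP. Then the product mechanism that, on input (x_1, …, x_n) ∈ 𝒳^n, outputs the product measure M_1(x_1) ⊗ ⋯ ⊗ M_n(x_n) on ℛ_1 × ⋯ × ℛ_n satisfies (max_i ε_i, max_i δ_i)-LDP with respect to changing any single coordinate: for any two tuples (x_1,…,x_n) and (x_1′,…,x_n′) differing in exactly one coordinate and any measurable set E ⊆ ℛ_1 × ⋯ × ℛ_n, (M_1(x_1) ⊗ ⋯ ⊗ M_n(x_n))(E) ≤ e^{max_i ε_i} · (M_1(x_1′) ⊗ ⋯ ⊗ M_n(x_n′))(E) + max_i δ_i. -/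
open MeasureTheory ProbabilityTheory

/-- A mechanism `M` (a map from inputs to output measures) satisfies
`(ε, δ)`-local differential privacy if for every pair of individual inputs
`x, x'` and every measurable event `E`,
`M x E ≤ e^ε * M x' E + δ`. -/
def IsLDP {𝒳 ℛ : Type*} [MeasurableSpace 𝒳] [MeasurableSpace ℛ]
    (M : 𝒳 → Measure ℛ) (ε δ : ℝ) : Prop :=
  ∀ x x' : 𝒳, ∀ E : Set ℛ, MeasurableSet E →
    M x E ≤ ENNReal.ofReal (Real.exp ε) * M x' E + ENNReal.ofReal δ

/-- **Parallel composition for local differential privacy.**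
If the Markov kernels `M i : 𝒳 → ℛ i`, `i = 1, …, n`, satisfy `(ε i, δ i)`-LDP
respectively, then the product mechanism
`(x 1, …, x n) ↦ M 1 (x 1) ⊗ ⋯ ⊗ M n (x n)` satisfies
`(max_i ε i, max_i δ i)`-LDP with respect to changing any single coordinate. -/
theorem parallel_composition_ldp {n : ℕ} {𝒳 : Type*} [MeasurableSpace 𝒳]
    {ℛ : Fin n → Type*} [∀ i, MeasurableSpace (ℛ i)]
    (M : ∀ i, Kernel 𝒳 (ℛ i)) [∀ i, IsMarkovKernel (M i)]
    (ε δ : Fin n → ℝ)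
    (hLDP : ∀ i, IsLDP (fun x => M i x) (ε i) (δ i))
    (x x' : Fin n → 𝒳) (j : Fin n)
    (hdiff : x j ≠ x' j) (hsame : ∀ i, i ≠ j → x i = x' i)
    (E : Set (∀ i, ℛ i)) (hE : MeasurableSet E) :
    Measure.pi (fun i => M i (x i)) E ≤
      ENNReal.ofReal (Real.exp (⨆ i, ε i)) * Measure.pi (fun i => M i (x' i)) E
        + ENNReal.ofReal (⨆ i, δ i) := by
  classical
  set p : Fin n → Prop := fun i => i = j with hp
  letI : Unique {i : Fin n // p i} := ⟨⟨⟨j, rfl⟩⟩, fun a => Subtype.ext a.2⟩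
  letI : Fintype {i : Fin n // p i} := Subtype.fintype p
  set e := MeasurableEquiv.piEquivPiSubtypeProd ℛ p with he
  set u : (∀ i : {i // p i}, ℛ i) ≃ᵐ ℛ j := MeasurableEquiv.piUnique (fun i : {i // p i} => ℛ i) with hu
  set S : Set ((∀ i : {i // p i}, ℛ i) × ∀ i : {i // ¬ p i}, ℛ i) := e.symm ⁻¹' E with hS
  have hSm : MeasurableSet S := e.symm.measurable hE
  have hslice : ∀ b, MeasurableSet ((fun a => (a, b)) ⁻¹' S) :=
    fun b => measurable_prodMk_right hSm
  have key : ∀ y : Fin n → 𝒳,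
      Measure.pi (fun i => M i (y i)) E
        = ∫⁻ b, (M j (y j)) (u.symm ⁻¹' ((fun a => (a, b)) ⁻¹' S))
            ∂(Measure.pi fun i : {i // ¬ p i} => M i (y i)) := by
    intro y
    have h1 := measurePreserving_piEquivPiSubtypeProd (fun i => M i (y i)) p
    have h2 := measurePreserving_piUnique (fun i : {i // p i} => M i (y i))
    rw [← he] at h1
    rw [← hu] at h2
    have hpre : ⇑e ⁻¹' S = E := by
      ext z; simp [hS]
    calc Measure.pi (fun i => M i (y i)) E
        = ((Measure.pi fun i : {i // p i} => M i (y i)).prod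
            (Measure.pi fun i : {i // ¬ p i} => M i (y i))) S := by
          rw [← hpre]
          exact h1.measure_preimage hSm.nullMeasurableSet
      _ = ∫⁻ b, (Measure.pi fun i : {i // p i} => M i (y i)) ((fun a => (a, b)) ⁻¹' S)
            ∂(Measure.pi fun i : {i // ¬ p i} => M i (y i)) := Measure.prod_apply_symm hSm
      _ = ∫⁻ b, (M j (y j)) (u.symm ⁻¹' ((fun a => (a, b)) ⁻¹' S))
            ∂(Measure.pi fun i : {i // ¬ p i} => M i (y i)) := by
          refine lintegral_congr fun b => ?_
          have hT : MeasurableSet (⇑u.symm ⁻¹' ((fun a => (a, b)) ⁻¹' S)) :=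
            u.symm.measurable (hslice b)
          have h3 : ⇑u ⁻¹' (⇑u.symm ⁻¹' ((fun a => (a, b)) ⁻¹' S)) = (fun a => (a, b)) ⁻¹' S := by
            ext a; simp
          rw [← h3]
          exact h2.measure_preimage hT.nullMeasurableSet
  rw [key x, key x']
  have hsnd : (fun i : {i // ¬ p i} => M i (x' i)) = fun i : {i // ¬ p i} => M i (x i) := by
    funext i
    rw [hsame i.1 i.2]
  rw [hsnd]
  set ν := Measure.pi fun i : {i // ¬ p i} => M i (x i) with hν
  haveI : IsProbabilityMeasure ν := by rw [hν]; infer_instance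
  have hεj : ENNReal.ofReal (Real.exp (ε j)) ≤ ENNReal.ofReal (Real.exp (⨆ i, ε i)) :=
    ENNReal.ofReal_le_ofReal (Real.exp_le_exp.mpr (le_ciSup (Set.Finite.bddAbove
      (Set.finite_range ε)) j))
  have hδj : ENNReal.ofReal (δ j) ≤ ENNReal.ofReal (⨆ i, δ i) :=
    ENNReal.ofReal_le_ofReal (le_ciSup (Set.Finite.bddAbove (Set.finite_range δ)) j)
  have hmono : ∀ b, (M j (x j)) (u.symm ⁻¹' ((fun a => (a, b)) ⁻¹' S))
      ≤ ENNReal.ofReal (Real.exp (⨆ i, ε i)) *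
          (M j (x' j)) (u.symm ⁻¹' ((fun a => (a, b)) ⁻¹' S)) + ENNReal.ofReal (⨆ i, δ i) := by
    intro b
    refine le_trans (hLDP j (x j) (x' j) _ (u.symm.measurable (hslice b))) ?_
    gcongr
  calc ∫⁻ b, (M j (x j)) (u.symm ⁻¹' ((fun a => (a, b)) ⁻¹' S)) ∂ν
      ≤ ∫⁻ b, (ENNReal.ofReal (Real.exp (⨆ i, ε i)) *
          (M j (x' j)) (u.symm ⁻¹' ((fun a => (a, b)) ⁻¹' S)) + ENNReal.ofReal (⨆ i, δ i)) ∂ν :=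
        lintegral_mono hmono
    _ = ENNReal.ofReal (Real.exp (⨆ i, ε i)) *
          ∫⁻ b, (M j (x' j)) (u.symm ⁻¹' ((fun a => (a, b)) ⁻¹' S)) ∂ν
          + ENNReal.ofReal (⨆ i, δ i) := by
        rw [lintegral_add_right _ measurable_const, lintegral_const, measure_univ, mul_one,
          lintegral_const_mul' _ _ ENNReal.ofReal_ne_top]
end

section
/- Privacy of the LDP-SGD iterate (sequential parallel composition): let K_1, …, K_n be Markov kernels, where K_i maps ℝ^d × 𝒳 to ℝ^d and, for every fixed θ ∈ ℝ^d, the kernel x ↦ K_i((θ, x)) satisfies (ε_i, δ_i)-LDP. Fix an initial point θ_0 ∈ ℝ^d and define the sequentially composed mechanism M_n from 𝒳^n to ℝ^d as the law of θ_n, where θ_1 ∼ K_1((θ_0, x_1)) and, conditionally on θ_{i−1}, θ_i ∼ K_i((θ_{i−1}, x_i)) for i = 2, …, n, with the randomness of distinct steps independent. Then M_n satisfies (max_{1≤j≤n} ε_j, max_{1≤j≤n} δ_j)-LDP with respect to each individual's datum: for any two inputs (x_1,…,x_n) and (x_1′,…,x_n′) differing in exactly one coordinate and any measurable set E ⊆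 ℝ^d, M_n(x_1,…,x_n)(E) ≤ e^{max_j ε_j} · M_n(x_1′,…,x_n′)(E) + max_j δ_j. -/
open MeasureTheory ProbabilityTheory

/-- The sequentially composed mechanism obtained from update kernels
`K i : Θ × 𝒳 → Θ` (each step `i + 1` updates the current iterate `θ` using the
datum `x i`, modelling one noisy SGD step), started at `θ₀`.  `seqLaw K θ₀ x n`
is the law of the `n`-th iterate `θ_n` on input data `x`, the randomness of
distinct steps being independent. -/
noncomputable def seqLaw {Θ 𝒳 : Type*} [MeasurableSpace Θ] [MeasurableSpace 𝒳]
    (K : ℕ → Kernel (Θ × 𝒳) Θ) (θ₀ : Θ) (x : ℕ → 𝒳) : ℕ → Measure Θ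
  | 0 => Measure.dirac θ₀
  | (i + 1) => (seqLaw K θ₀ x i).bind (fun θ => K i (θ, x i))

lemma seqLaw_prob {Θ 𝒳 : Type*} [MeasurableSpace Θ] [MeasurableSpace 𝒳]
    (K : ℕ → Kernel (Θ × 𝒳) Θ) [∀ i, IsMarkovKernel (K i)] (θ₀ : Θ) (x : ℕ → 𝒳) :
    ∀ m, IsProbabilityMeasure (seqLaw K θ₀ x m) := by
  intro m
  induction m with
  | zero => exact Measure.dirac.isProbabilityMeasure
  | succ i ih =>
    constructor
    show (seqLaw K θ₀ x i).bind (fun θ => K i (θ, x i)) Set.univ = 1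
    have hm : Measurable (fun θ : Θ => K i (θ, x i)) :=
      (K i).measurable.comp measurable_prodMk_right
    rw [Measure.bind_apply MeasurableSet.univ hm.aemeasurable]
    simp [ih.measure_univ]

/-- **Privacy of the LDP-SGD iterate (sequential parallel composition).**
If for every fixed current iterate `θ` the update kernel `x ↦ K i (θ, x)` of
step `i + 1` satisfies `(ε i, δ i)`-LDP, then the sequentially composed
mechanism `M_n = seqLaw K θ₀ · n` (the law of the `n`-th LDP-SGD iterate)
satisfies `(max_j ε j, max_j δ j)`-LDP with respect to each individual's datum:
for inputs differing in exactly one coordinate among the `n` used ones and any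
measurable `E ⊆ ℝ^d`, the LDP inequality holds with the maximal budgets. -/
theorem ldp_sgd_privacy {d n : ℕ} {𝒳 : Type*} [MeasurableSpace 𝒳]
    (K : ℕ → Kernel ((Fin d → ℝ) × 𝒳) (Fin d → ℝ)) [∀ i, IsMarkovKernel (K i)]
    (ε δ : ℕ → ℝ)
    (hLDP : ∀ i, i < n → ∀ θ : Fin d → ℝ, IsLDP (fun x => K i (θ, x)) (ε i) (δ i))
    (θ₀ : Fin d → ℝ) (x x' : ℕ → 𝒳) (j : ℕ) (hj : j < n)
    (hdiff : x j ≠ x' j) (hsame : ∀ i, i < n → i ≠ j → x i = x' i)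
    (E : Set (Fin d → ℝ)) (hE : MeasurableSet E) :
    seqLaw K θ₀ x n E ≤
      ENNReal.ofReal (Real.exp (⨆ i : Fin n, ε i)) * seqLaw K θ₀ x' n E
        + ENNReal.ofReal (⨆ i : Fin n, δ i) := by
  set c : ENNReal := ENNReal.ofReal (Real.exp (ε j)) with hc
  set D : ENNReal := ENNReal.ofReal (δ j) with hD
  have hmeasK : ∀ (i : ℕ) (y : 𝒳), Measurable (fun θ : Fin d → ℝ => K i (θ, y)) :=
    fun i y => (K i).measurable.comp measurable_prodMk_right
  have hmeasKE : ∀ (i : ℕ) (y : 𝒳) (F : Set (Fin d → ℝ)), MeasurableSet F →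
      Measurable (fun θ : Fin d → ℝ => K i (θ, y) F) :=
    fun i y F hF => ((K i).measurable_coe hF).comp measurable_prodMk_right
  have hprob : ∀ (y : ℕ → 𝒳) m, IsProbabilityMeasure (seqLaw K θ₀ y m) :=
    fun y m => seqLaw_prob K θ₀ y m
  -- before step `j+1` the two laws coincide
  have heq : ∀ i, i ≤ j → seqLaw K θ₀ x i = seqLaw K θ₀ x' i := by
    intro i hi
    induction i with
    | zero => rfl
    | succ i ih =>
      show (seqLaw K θ₀ x i).bind (fun θ => K i (θ, x i))
          = (seqLaw K θ₀ x' i).bind (fun θ => K i (θ, x' i))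
      rw [ih (Nat.le_of_succ_le hi),
        hsame i (lt_of_lt_of_le (Nat.lt_of_succ_le hi) hj.le)
          (Nat.ne_of_lt (Nat.lt_of_succ_le hi))]
  -- base set-level inequality at step `j+1`
  have hbase : ∀ F : Set (Fin d → ℝ), MeasurableSet F →
      seqLaw K θ₀ x (j + 1) F ≤ c * seqLaw K θ₀ x' (j + 1) F + D := by
    intro F hF
    show (seqLaw K θ₀ x j).bind (fun θ => K j (θ, x j)) F ≤
      c * ((seqLaw K θ₀ x' j).bind (fun θ => K j (θ, x' j)) F) + D
    rw [heq j le_rfl, Measure.bind_apply hF (hmeasK j (x j)).aemeasurable,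
      Measure.bind_apply hF (hmeasK j (x' j)).aemeasurable]
    calc ∫⁻ θ, K j (θ, x j) F ∂(seqLaw K θ₀ x' j)
        ≤ ∫⁻ θ, (c * K j (θ, x' j) F + D) ∂(seqLaw K θ₀ x' j) := by
          refine lintegral_mono fun θ => ?_
          exact hLDP j hj θ (x j) (x' j) F hF
      _ = c * ∫⁻ θ, K j (θ, x' j) F ∂(seqLaw K θ₀ x' j) + D := by
          rw [lintegral_add_right _ measurable_const, lintegral_const,
            lintegral_const_mul c (hmeasKE j (x' j) F hF),
            (hprob x' j).measure_univ, mul_one]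
  -- the key invariant, propagated through the remaining steps
  have key : ∀ m, j < m → m ≤ n → ∃ τ : Measure (Fin d → ℝ), τ Set.univ ≤ D ∧
      ∀ F : Set (Fin d → ℝ), MeasurableSet F →
        seqLaw K θ₀ x m F ≤ c * seqLaw K θ₀ x' m F + τ F := by
    intro m
    induction m with
    | zero => omega
    | succ m ih =>
      intro hjm hmn
      rcases Nat.lt_or_ge j m with hjm' | hjm'
      · -- inductive step: `x m = x' m`
        obtain ⟨τ, hτu, hτ⟩ := ih hjm' (Nat.le_of_succ_le hmn)
        have hxm : x m = x' m :=
          hsame m (Nat.lt_of_succ_le hmn) (Nat.ne_of_gt hjm')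
        refine ⟨τ.bind (fun θ => K m (θ, x m)), ?_, ?_⟩
        · rw [Measure.bind_apply MeasurableSet.univ (hmeasK m (x m)).aemeasurable]
          calc ∫⁻ θ, K m (θ, x m) Set.univ ∂τ = ∫⁻ _, 1 ∂τ := by
                simp
            _ = τ Set.univ := by simp
            _ ≤ D := hτu
        · intro F hF
          have hle : seqLaw K θ₀ x m ≤ c • seqLaw K θ₀ x' m + τ := by
            rw [Measure.le_iff]
            intro s hs
            simpa using hτ s hs
          show (seqLaw K θ₀ x m).bind (fun θ => K m (θ, x m)) F ≤
            c * ((seqLaw K θ₀ x' m).bind (fun θ => K m (θ, x' m)) F)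
              + τ.bind (fun θ => K m (θ, x m)) F
          rw [Measure.bind_apply hF (hmeasK m (x m)).aemeasurable,
            Measure.bind_apply hF (hmeasK m (x' m)).aemeasurable,
            Measure.bind_apply hF (hmeasK m (x m)).aemeasurable, ← hxm]
          calc ∫⁻ θ, K m (θ, x m) F ∂(seqLaw K θ₀ x m)
              ≤ ∫⁻ θ, K m (θ, x m) F ∂(c • seqLaw K θ₀ x' m + τ) :=
                lintegral_mono' hle le_rfl
            _ = c * ∫⁻ θ, K m (θ, x m) F ∂(seqLaw K θ₀ x' m)
                + ∫⁻ θ, K m (θ, x m) F ∂τ := by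
                rw [lintegral_add_measure, lintegral_smul_measure, smul_eq_mul]
      · -- base case `m = j`
        have hmj : m = j := by omega
        subst hmj
        -- Hahn decomposition of `seqLaw x (m+1)` against `c • seqLaw x' (m+1)`
        set μ := seqLaw K θ₀ x (m + 1) with hμ
        set ν := c • seqLaw K θ₀ x' (m + 1) with hν
        have : IsProbabilityMeasure (seqLaw K θ₀ x (m + 1)) := hprob x (m + 1)
        have : IsProbabilityMeasure (seqLaw K θ₀ x' (m + 1)) := hprob x' (m + 1)
        have hνfin : IsFiniteMeasure ν := by
          constructor
          rw [hν, Measure.smul_apply, smul_eq_mul, (hprob x' (m + 1)).measure_univ,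
            mul_one]
          exact ENNReal.ofReal_lt_top
        obtain ⟨s, hs, h₁, h₂⟩ := MeasureTheory.hahn_decomposition (μ := μ) (ν := ν)
        have hres : ν.restrict s ≤ μ.restrict s := by
          rw [Measure.le_iff]
          intro t ht
          rw [Measure.restrict_apply ht, Measure.restrict_apply ht]
          exact h₁ (t ∩ s) (ht.inter hs) Set.inter_subset_right
        have hresfin : IsFiniteMeasure (ν.restrict s) := inferInstance
        refine ⟨μ.restrict s - ν.restrict s, ?_, ?_⟩
        · rw [Measure.sub_apply MeasurableSet.univ hres,
            Measure.restrict_apply MeasurableSet.univ,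
            Measure.restrict_apply MeasurableSet.univ, Set.univ_inter]
          rw [tsub_le_iff_right]
          calc μ s ≤ c * seqLaw K θ₀ x' (m + 1) s + D := hbase s hs
            _ = D + ν s := by rw [hν, Measure.smul_apply, smul_eq_mul, add_comm]
        · intro F hF
          have hsplit : μ F = μ (F ∩ s) + μ (F \ s) :=
            (measure_inter_add_diff F hs).symm
          have hτF : (μ.restrict s - ν.restrict s) F = μ (F ∩ s) - ν (F ∩ s) := by
            rw [Measure.sub_apply hF hres, Measure.restrict_apply hF,
              Measure.restrict_apply hF]
          have h1 : μ (F ∩ s) = ν (F ∩ s) + (μ (F ∩ s) - ν (F ∩ s)) := by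
            rw [add_comm, tsub_add_cancel_of_le
              (h₁ (F ∩ s) (hF.inter hs) Set.inter_subset_right)]
          have h2 : μ (F \ s) ≤ ν (F \ s) :=
            h₂ (F \ s) (hF.diff hs) (Set.diff_subset_iff.mpr (by simp))
          calc μ F = μ (F ∩ s) + μ (F \ s) := hsplit
            _ ≤ (ν (F ∩ s) + (μ (F ∩ s) - ν (F ∩ s))) + ν (F \ s) := by
                rw [← h1]; exact add_le_add le_rfl h2
            _ = (ν (F ∩ s) + ν (F \ s)) + (μ (F ∩ s) - ν (F ∩ s)) := by ring
            _ = ν F + (μ.restrict s - ν.restrict s) F := by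
                rw [measure_inter_add_diff F hs, hτF]
            _ = c * seqLaw K θ₀ x' (m + 1) F + (μ.restrict s - ν.restrict s) F := by
                rw [hν, Measure.smul_apply, smul_eq_mul]
  -- conclude
  obtain ⟨τ, hτu, hτ⟩ := key n hj (le_refl n)
  have hτE : τ E ≤ D := le_trans (measure_mono (Set.subset_univ E)) hτu
  have hεle : ε j ≤ ⨆ i : Fin n, ε i :=
    le_ciSup (f := fun i : Fin n => ε (i : ℕ))
      (Set.Finite.bddAbove (Set.finite_range _)) ⟨j, hj⟩
  have hδle : δ j ≤ ⨆ i : Fin n, δ i :=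
    le_ciSup (f := fun i : Fin n => δ (i : ℕ))
      (Set.Finite.bddAbove (Set.finite_range _)) ⟨j, hj⟩
  calc seqLaw K θ₀ x n E ≤ c * seqLaw K θ₀ x' n E + τ E := hτ E hE
    _ ≤ ENNReal.ofReal (Real.exp (⨆ i : Fin n, ε i)) * seqLaw K θ₀ x' n E
        + ENNReal.ofReal (⨆ i : Fin n, δ i) := by
        refine add_le_add (mul_le_mul_left ?_ _) (le_trans hτE ?_)
        · exact ENNReal.ofReal_le_ofReal (Real.exp_le_exp.mpr hεle)
        · exact ENNReal.ofReal_le_ofReal hδle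
end

section
/- Central differential privacy of LDP-SGD with a common budget: in the setting of the sequentially composed mechanism M_n built from update kernels K_1, …, K_n, if every iteration uses the same privacy parameters, i.e., for every fixed θ ∈ ℝ^d and every i the kernel x ↦ K_i((θ, x)) satisfies (ε, δ)-LDP, then M_n is (ε, δ)-differentially private with respect to adjacent datasets: for any (x_1,…,x_n) and (x_1′,…,x_n′) in 𝒳^n differing in exactly one coordinate and any measurable E ⊆ ℝ^d, M_n(x_1,…,x_n)(E) ≤ e^ε · M_n(x_1′,…,x_n′)(E) + δ. -/
open MeasureTheory ProbabilityTheory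
open scoped ENNReal

section Aux

variable {Θ 𝒳 : Type*} [MeasurableSpace Θ] [MeasurableSpace 𝒳]

lemma seqLaw_measurable_step (K : ℕ → Kernel (Θ × 𝒳) Θ) (i : ℕ) (x : 𝒳) :
    Measurable (fun θ : Θ => (K i) (θ, x)) :=
  (K i).measurable.comp (measurable_id.prodMk measurable_const)

lemma seqLaw_isProb (K : ℕ → Kernel (Θ × 𝒳) Θ) [∀ i, IsMarkovKernel (K i)]
    (θ₀ : Θ) (x : ℕ → 𝒳) : ∀ i, IsProbabilityMeasure (seqLaw K θ₀ x i) := by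
  intro i
  induction i with
  | zero => simpa [seqLaw] using (inferInstance : IsProbabilityMeasure (Measure.dirac θ₀))
  | succ i ih =>
    constructor
    rw [seqLaw, Measure.bind_apply MeasurableSet.univ (seqLaw_measurable_step K i (x i)).aemeasurable]
    simp [measure_univ]

/-- Post-processing / bind preserves the DP inequality. -/
lemma bind_dp {μ ν : Measure Θ} [IsProbabilityMeasure μ] [IsProbabilityMeasure ν]
    {κ : Θ → Measure Θ} (hκ : Measurable κ) (hκ1 : ∀ θ, κ θ Set.univ = 1)
    {a δ' : ENNReal} (ha : a ≠ ⊤)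
    (h : ∀ E : Set Θ, MeasurableSet E → μ E ≤ a * ν E + δ')
    (E : Set Θ) (hE : MeasurableSet E) :
    μ.bind κ E ≤ a * (ν.bind κ) E + δ' := by
  rw [Measure.bind_apply hE hκ.aemeasurable, Measure.bind_apply hE hκ.aemeasurable]
  set f : Θ → ℝ≥0∞ := fun θ => κ θ E with hf
  have hfm : Measurable f := (Measure.measurable_coe hE).comp hκ
  have hf1 : ∀ θ, f θ ≤ 1 := fun θ => by
    rw [hf]; calc κ θ E ≤ κ θ Set.univ := measure_mono (Set.subset_univ _)
    _ = 1 := hκ1 θ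
  set fR : Θ → ℝ := fun θ => (f θ).toReal with hfR
  have hfRm : Measurable fR := hfm.ennreal_toReal
  have hfR1 : ∀ θ, fR θ ≤ 1 := fun θ => by
    rw [hfR]
    exact ENNReal.toReal_le_of_le_ofReal zero_le_one (by simpa using hf1 θ)
  have hofReal : ∀ θ, ENNReal.ofReal (fR θ) = f θ := fun θ =>
    ENNReal.ofReal_toReal (lt_of_le_of_lt (hf1 θ) ENNReal.one_lt_top).ne
  have key : ∀ (ρ : Measure Θ), ∫⁻ θ, f θ ∂ρ = ∫⁻ t in Set.Ioi (0:ℝ), ρ {θ | t < fR θ} := by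
    intro ρ
    rw [← lintegral_eq_lintegral_meas_lt ρ
      (Filter.Eventually.of_forall fun θ => ENNReal.toReal_nonneg) hfRm.aemeasurable]
    exact lintegral_congr fun θ => (hofReal θ).symm
  rw [key μ, key ν]
  have hset : ∀ t : ℝ, MeasurableSet {θ | t < fR θ} := fun t =>
    measurableSet_lt measurable_const hfRm
  have hsplit : Set.Ioi (0:ℝ) = Set.Ioc (0:ℝ) 1 ∪ Set.Ioi (1:ℝ) := by
    rw [Set.Ioc_union_Ioi_eq_Ioi zero_le_one]
  have hzero : ∫⁻ t in Set.Ioi (1:ℝ), μ {θ | t < fR θ} = 0 := by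
    rw [setLIntegral_congr_fun measurableSet_Ioi
      (fun t ht => ?_), lintegral_zero]
    have : {θ | t < fR θ} = ∅ := by
      ext θ; simp only [Set.mem_setOf_eq, Set.mem_empty_iff_false, iff_false, not_lt]
      exact (hfR1 θ).trans (le_of_lt ht)
    simp [this]
  calc ∫⁻ t in Set.Ioi (0:ℝ), μ {θ | t < fR θ}
      = (∫⁻ t in Set.Ioc (0:ℝ) 1, μ {θ | t < fR θ})
        + ∫⁻ t in Set.Ioi (1:ℝ), μ {θ | t < fR θ} := by
        rw [hsplit, lintegral_union measurableSet_Ioi Set.Ioc_disjoint_Ioi_same]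
    _ = ∫⁻ t in Set.Ioc (0:ℝ) 1, μ {θ | t < fR θ} := by rw [hzero]; exact add_zero _
    _ ≤ ∫⁻ t in Set.Ioc (0:ℝ) 1, (a * ν {θ | t < fR θ} + δ') :=
        lintegral_mono fun t => h _ (hset t)
    _ = (a * ∫⁻ t in Set.Ioc (0:ℝ) 1, ν {θ | t < fR θ}) + δ' := by
        rw [lintegral_add_right _ measurable_const, lintegral_const,
          lintegral_const_mul' _ _ ha]
        simp [Real.volume_Ioc]
    _ ≤ (a * ∫⁻ t in Set.Ioi (0:ℝ), ν {θ | t < fR θ}) + δ' := by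
        gcongr
        exact Set.Ioc_subset_Ioi_self

end Aux

/-- **Central differential privacy of LDP-SGD with a common budget.**
If every iteration of the sequentially composed mechanism uses the same privacy
parameters, i.e. for every fixed `θ` and every step `i` the kernel
`x ↦ K i (θ, x)` satisfies `(ε, δ)`-LDP, then the law `M_n` of the `n`-th
iterate is `(ε, δ)`-differentially private with respect to adjacent datasets:
for any two datasets differing in exactly one coordinate and any measurable
`E ⊆ ℝ^d`, `M_n(x)(E) ≤ e^ε · M_n(x')(E) + δ`. -/
theorem ldp_sgd_central_dp {d n : ℕ} {𝒳 : Type*} [MeasurableSpace 𝒳]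
    (K : ℕ → Kernel ((Fin d → ℝ) × 𝒳) (Fin d → ℝ)) [∀ i, IsMarkovKernel (K i)]
    (ε δ : ℝ)
    (hLDP : ∀ i, i < n → ∀ θ : Fin d → ℝ, IsLDP (fun x => K i (θ, x)) ε δ)
    (θ₀ : Fin d → ℝ) (x x' : ℕ → 𝒳) (j : ℕ) (hj : j < n)
    (hdiff : x j ≠ x' j) (hsame : ∀ i, i < n → i ≠ j → x i = x' i)
    (E : Set (Fin d → ℝ)) (hE : MeasurableSet E) :
    seqLaw K θ₀ x n E ≤
      ENNReal.ofReal (Real.exp ε) * seqLaw K θ₀ x' n E + ENNReal.ofReal δ := by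
  set a := ENNReal.ofReal (Real.exp ε) with ha
  have haT : a ≠ ⊤ := ENNReal.ofReal_ne_top
  -- laws agree up to step j
  have heq : ∀ i, i ≤ j → seqLaw K θ₀ x i = seqLaw K θ₀ x' i := by
    intro i hi
    induction i with
    | zero => rfl
    | succ i ih =>
      have hi' : i < j := Nat.lt_of_succ_le hi
      have hx : x i = x' i := hsame i (hi'.trans hj) hi'.ne
      rw [seqLaw, seqLaw, ih (le_of_lt hi'), hx]
  -- main claim by induction from j+1 to n
  have main : ∀ i, j < i → i ≤ n → ∀ E : Set (Fin d → ℝ), MeasurableSet E →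
      seqLaw K θ₀ x i E ≤ a * seqLaw K θ₀ x' i E + ENNReal.ofReal δ := by
    intro i hji hin
    induction i with
    | zero => omega
    | succ i ih =>
      rcases Nat.lt_or_ge j i with hlt | hge
      · -- inductive step: i > j, data agree at step i
        intro E hE
        have hx : x i = x' i := hsame i (Nat.lt_of_succ_le hin) (Nat.ne_of_gt hlt)
        have := seqLaw_isProb K θ₀ x i
        have := seqLaw_isProb K θ₀ x' i
        rw [seqLaw, seqLaw, ← hx]
        exact bind_dp (seqLaw_measurable_step K i (x i))
          (fun θ => measure_univ) haT
          (ih hlt (le_of_lt (Nat.lt_of_succ_le hin))) E hE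
      · -- base step: i = j
        have hij : i = j := le_antisymm hge (Nat.lt_succ_iff.mp hji)
        subst hij
        intro E hE
        have := seqLaw_isProb K θ₀ x i
        rw [seqLaw, seqLaw, heq i le_rfl,
          Measure.bind_apply hE (seqLaw_measurable_step K i (x i)).aemeasurable,
          Measure.bind_apply hE (seqLaw_measurable_step K i (x' i)).aemeasurable]
        calc ∫⁻ θ, (K i) (θ, x i) E ∂ seqLaw K θ₀ x' i
            ≤ ∫⁻ θ, (a * (K i) (θ, x' i) E + ENNReal.ofReal δ) ∂ seqLaw K θ₀ x' i := by
              apply lintegral_mono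
              intro θ
              exact hLDP i (Nat.lt_of_succ_le hin) θ (x i) (x' i) E hE
          _ = (a * ∫⁻ θ, (K i) (θ, x' i) E ∂ seqLaw K θ₀ x' i) + ENNReal.ofReal δ := by
              rw [lintegral_add_right _ measurable_const, lintegral_const,
                lintegral_const_mul' _ _ haT]
              have := seqLaw_isProb K θ₀ x' i
              simp [measure_univ]
  exact main n hj le_rfl E hE
end

section
/- Gaussian differential privacy duality for the Gaussian mechanism: let f : 𝒳 → ℝ^d have bounded ℓ₂-sensitivity sup_{x, x′ ∈ 𝒳} ‖f(x) − f(x′)‖₂ ≤ Δ for some Δ > 0, let μ > 0, and define the mechanism M(x) as the law of f(x) + Z with Z ∼ N(0, (Δ/μ)² I_d). Then for every ε > 0, M satisfies (ε, δ_μ(ε))-LDP, where δ_μ(ε) = Φ(−ε/μ + μ/2) − e^ε Φ(−ε/μ − μ/2) and Φ is the cumulative distribution function of the standard normal distribution: for all x, x′ ∈ 𝒳 and every measurable E ⊆ ℝ^d, M(x)(E) ≤ e^ε · M(x′)(E) + δ_μ(ε). -/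
open MeasureTheory ProbabilityTheory

/-- The Gaussian measure `N(0, σ² I_d)` on `ℝ^d`: the product of `d` i.i.d.
centered real Gaussians with variance `σ²` (here `v = σ²`). -/
noncomputable def isoGaussian (d : ℕ) (v : NNReal) : Measure (Fin d → ℝ) :=
  Measure.pi fun _ : Fin d => gaussianReal 0 v

/-- The Gaussian mechanism on `ℝ^d`: on input `x` it outputs `f x + Z` with
`Z ∼ N(0, σ² I_d)`. -/
noncomputable def gaussianMechanism {d : ℕ} {𝒳 : Type*} (f : 𝒳 → (Fin d → ℝ))
    (v : NNReal) (x : 𝒳) : Measure (Fin d → ℝ) :=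
  (isoGaussian d v).map (fun z => f x + z)

/-- `Φ`, the cumulative distribution function of the standard normal
distribution. -/
noncomputable def stdNormalCDF (t : ℝ) : ℝ :=
  (gaussianReal 0 1 (Set.Iic t)).toReal

section Auxiliary

open Real
open scoped ENNReal NNReal

lemma gaussianPDFReal_mul_eq (m₁ m₂ : ℝ) (v₁ v₂ : ℝ≥0) (hv₁ : v₁ ≠ 0) (hv₂ : v₂ ≠ 0)
    (y x : ℝ) :
    gaussianPDFReal m₁ v₁ x * gaussianPDFReal m₂ v₂ (y - x)
      = gaussianPDFReal (m₁ + m₂) (v₁ + v₂) y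
        * gaussianPDFReal (m₁ + v₁ / (v₁ + v₂) * (y - m₁ - m₂)) (v₁ * v₂ / (v₁ + v₂)) x := by
  have hV₁ : (0:ℝ) < v₁ := lt_of_le_of_ne v₁.coe_nonneg (by exact_mod_cast (Ne.symm hv₁))
  have hV₂ : (0:ℝ) < v₂ := lt_of_le_of_ne v₂.coe_nonneg (by exact_mod_cast (Ne.symm hv₂))
  have hVs : (0:ℝ) < (v₁:ℝ) + v₂ := by linarith
  have hcoe : ((v₁ * v₂ / (v₁ + v₂) : ℝ≥0) : ℝ) = (v₁:ℝ) * v₂ / ((v₁:ℝ) + v₂) := by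
    push_cast; ring
  have hπ : (0:ℝ) < π := Real.pi_pos
  simp only [gaussianPDFReal, hcoe, NNReal.coe_add]
  rw [mul_mul_mul_comm, mul_mul_mul_comm ((√(2 * π * ((v₁:ℝ) + v₂)))⁻¹)]
  congr 1
  · rw [← mul_inv, ← mul_inv, ← Real.sqrt_mul (by positivity), ← Real.sqrt_mul (by positivity)]
    congr 1
    field_simp
  · rw [← Real.exp_add, ← Real.exp_add]
    congr 1
    field_simp
    ring

lemma lintegral_gaussianPDF_conv (m₁ m₂ : ℝ) (v₁ v₂ : ℝ≥0) (hv₁ : v₁ ≠ 0) (hv₂ : v₂ ≠ 0)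
    (y : ℝ) :
    ∫⁻ x, gaussianPDF m₁ v₁ x * gaussianPDF m₂ v₂ (y - x)
      = gaussianPDF (m₁ + m₂) (v₁ + v₂) y := by
  have hv' : v₁ * v₂ / (v₁ + v₂) ≠ 0 := by
    refine div_ne_zero (mul_ne_zero hv₁ hv₂) ?_
    simp [hv₁]
  simp only [gaussianPDF_def]
  calc ∫⁻ x, ENNReal.ofReal (gaussianPDFReal m₁ v₁ x)
        * ENNReal.ofReal (gaussianPDFReal m₂ v₂ (y - x))
      = ∫⁻ x, ENNReal.ofReal (gaussianPDFReal (m₁ + m₂) (v₁ + v₂) y)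
          * ENNReal.ofReal
            (gaussianPDFReal (m₁ + v₁ / (v₁ + v₂) * (y - m₁ - m₂)) (v₁ * v₂ / (v₁ + v₂)) x) := by
        congr 1 with x
        rw [← ENNReal.ofReal_mul (gaussianPDFReal_nonneg _ _ _),
          ← ENNReal.ofReal_mul (gaussianPDFReal_nonneg _ _ _),
          gaussianPDFReal_mul_eq m₁ m₂ v₁ v₂ hv₁ hv₂ y x]
    _ = ENNReal.ofReal (gaussianPDFReal (m₁ + m₂) (v₁ + v₂) y) := by
        rw [lintegral_const_mul _ ((measurable_gaussianPDFReal _ _).ennreal_ofReal),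
          lintegral_gaussianPDFReal_eq_one _ hv', mul_one]

lemma gaussianReal_prod_add (m₁ m₂ : ℝ) (v₁ v₂ : ℝ≥0) :
    ((gaussianReal m₁ v₁).prod (gaussianReal m₂ v₂)).map (fun p : ℝ × ℝ => p.1 + p.2)
      = gaussianReal (m₁ + m₂) (v₁ + v₂) := by
  by_cases hv₁ : v₁ = 0
  · subst hv₁
    rw [gaussianReal_zero_var, Measure.dirac_prod, Measure.map_map (by fun_prop) (by fun_prop)]
    have h : ((fun p : ℝ × ℝ => p.1 + p.2) ∘ Prod.mk m₁) = fun y => y + m₁ := by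
      funext y; simp [add_comm]
    rw [h, gaussianReal_map_add_const, add_comm m₂ m₁, zero_add]
  by_cases hv₂ : v₂ = 0
  · subst hv₂
    rw [gaussianReal_zero_var, Measure.prod_dirac, Measure.map_map (by fun_prop) (by fun_prop)]
    have h : ((fun p : ℝ × ℝ => p.1 + p.2) ∘ fun x => (x, m₂)) = fun x => x + m₂ := by
      funext x; simp
    rw [h, gaussianReal_map_add_const, add_zero]
  refine Measure.ext fun s hs => ?_
  rw [Measure.map_apply (by fun_prop) hs, Measure.prod_apply (hs.preimage (by fun_prop))]
  have hsec : ∀ x : ℝ,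
      gaussianReal m₂ v₂ (Prod.mk x ⁻¹' ((fun p : ℝ × ℝ => p.1 + p.2) ⁻¹' s))
        = ∫⁻ y in s, gaussianPDF m₂ v₂ (y - x) := by
    intro x
    have h1 : (Prod.mk x ⁻¹' ((fun p : ℝ × ℝ => p.1 + p.2) ⁻¹' s)) = (fun y => x + y) ⁻¹' s := rfl
    rw [h1, ← Measure.map_apply (by fun_prop) hs, gaussianReal_map_const_add,
      gaussianReal_apply _ hv₂]
    refine setLIntegral_congr_fun hs (fun y _ => ?_)
    simp only [gaussianPDF_def]
    rw [gaussianPDFReal_sub]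
  simp_rw [hsec]
  rw [gaussianReal_of_var_ne_zero _ hv₁,
    lintegral_withDensity_eq_lintegral_mul _ (measurable_gaussianPDF _ _) ?_]
  swap
  · exact (Measurable.lintegral_prod_right
      (((measurable_gaussianPDF m₂ v₂).comp (measurable_snd.sub measurable_fst))))
  calc ∫⁻ x, gaussianPDF m₁ v₁ x * ∫⁻ y in s, gaussianPDF m₂ v₂ (y - x) ∂volume
      = ∫⁻ x, ∫⁻ y in s, gaussianPDF m₁ v₁ x * gaussianPDF m₂ v₂ (y - x) ∂volume ∂volume := by
        congr 1 with x
        have hm : Measurable fun y : ℝ => gaussianPDF m₂ v₂ (y - x) :=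
          (measurable_gaussianPDF m₂ v₂).comp (measurable_id.sub measurable_const)
        rw [lintegral_const_mul _ hm]
    _ = ∫⁻ y in s, ∫⁻ x, gaussianPDF m₁ v₁ x * gaussianPDF m₂ v₂ (y - x) ∂volume ∂volume := by
        refine lintegral_lintegral_swap ?_
        apply Measurable.aemeasurable
        exact ((measurable_gaussianPDF m₁ v₁).comp measurable_fst).mul
          ((measurable_gaussianPDF m₂ v₂).comp (measurable_snd.sub measurable_fst))
    _ = ∫⁻ y in s, gaussianPDF (m₁ + m₂) (v₁ + v₂) y ∂volume := by
        congr 1 with y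
        exact lintegral_gaussianPDF_conv m₁ m₂ v₁ v₂ hv₁ hv₂ y
    _ = gaussianReal (m₁ + m₂) (v₁ + v₂) s := (gaussianReal_apply _ (by simp [hv₁]) s).symm

lemma map_add_map_gaussianReal {α β : Type*} [MeasurableSpace α] [MeasurableSpace β]
    (μ : Measure α) (ν : Measure β) [SFinite μ] [SFinite ν]
    {f : α → ℝ} {g : β → ℝ} (hf : Measurable f) (hg : Measurable g)
    {m₁ m₂ : ℝ} {v₁ v₂ : ℝ≥0}
    (hμ : μ.map f = gaussianReal m₁ v₁) (hν : ν.map g = gaussianReal m₂ v₂) :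
    (μ.prod ν).map (fun p => f p.1 + g p.2) = gaussianReal (m₁ + m₂) (v₁ + v₂) := by
  have h : (fun p : α × β => f p.1 + g p.2)
      = (fun q : ℝ × ℝ => q.1 + q.2) ∘ Prod.map f g := rfl
  rw [h, ← Measure.map_map (by fun_prop) (hf.prodMap hg), ← Measure.map_prod_map _ _ hf hg,
    hμ, hν, gaussianReal_prod_add]

lemma pi_gaussianReal_map_sum : ∀ (d : ℕ) (m c : Fin d → ℝ) (v : ℝ≥0),
    (Measure.pi fun i => gaussianReal (m i) v).map (fun z => ∑ i, c i * z i)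
      = gaussianReal (∑ i, c i * m i) (∑ i, (NNReal.mk (c i ^ 2) (sq_nonneg _) * v : ℝ≥0)) := by
  intro d
  induction d with
  | zero =>
    intro m c v
    rw [Measure.pi_of_empty _ (fun i => (0:ℝ)), Measure.map_dirac' (f := fun z : Fin 0 → ℝ => ∑ i, c i * z i) (by fun_prop)]
    simp [gaussianReal_zero_var]
  | succ n ih =>
    intro m c v
    have mp := measurePreserving_piFinSuccAbove (fun i => gaussianReal (m i) v) 0
    set e := MeasurableEquiv.piFinSuccAbove (fun _ : Fin (n+1) => ℝ) 0 with he
    have hS : (fun z : Fin (n+1) → ℝ => ∑ i, c i * z i)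
        = (fun p : ℝ × (Fin n → ℝ) =>
            c 0 * p.1 + ∑ j, c ((0 : Fin (n+1)).succAbove j) * p.2 j) ∘ e := by
      funext z
      simp only [Function.comp_apply, he, MeasurableEquiv.piFinSuccAbove_apply]
      exact Fin.sum_univ_succAbove (fun i => c i * z i) 0
    rw [hS, ← Measure.map_map (by fun_prop) e.measurable, mp.map_eq,
      Fin.sum_univ_succAbove (fun i => c i * m i) 0,
      Fin.sum_univ_succAbove (fun i => (NNReal.mk (c i ^ 2) (sq_nonneg _) * v : ℝ≥0)) 0]
    exact map_add_map_gaussianReal _ _ (measurable_id.const_mul _) (by fun_prop)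
      (gaussianReal_map_const_mul _) (ih _ _ _)

lemma pi_gaussianReal_map_add (d : ℕ) (v : ℝ≥0) (a : Fin d → ℝ) :
    (Measure.pi fun _ : Fin d => gaussianReal 0 v).map (fun z => a + z)
      = Measure.pi fun i => gaussianReal (a i) v := by
  have hmeas : Measurable fun z : Fin d → ℝ => a + z :=
    measurable_const_add a
  refine (Measure.pi_eq fun s hs => ?_).symm
  rw [Measure.map_apply hmeas (MeasurableSet.univ_pi hs)]
  have hpre : (fun z : Fin d → ℝ => a + z) ⁻¹' Set.pi Set.univ s
      = Set.pi Set.univ fun i => (fun x => a i + x) ⁻¹' s i := by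
    ext z
    simp [Set.mem_pi]
  rw [hpre, Measure.pi_pi]
  refine Finset.prod_congr rfl fun i _ => ?_
  rw [← Measure.map_apply (measurable_const_add _) (hs i), gaussianReal_map_const_add, zero_add]

lemma gaussianReal_eq_withDensity (m₁ m₂ : ℝ) (v : ℝ≥0) (hv : v ≠ 0) :
    gaussianReal m₁ v = (gaussianReal m₂ v).withDensity
      (fun x => ENNReal.ofReal (Real.exp ((m₁ - m₂) / v * x - (m₁ ^ 2 - m₂ ^ 2) / (2 * v)))) := by
  have hV : (0:ℝ) < v := lt_of_le_of_ne v.coe_nonneg (by exact_mod_cast (Ne.symm hv))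
  have key : ∀ x : ℝ, gaussianPDFReal m₂ v x
      * Real.exp ((m₁ - m₂) / v * x - (m₁ ^ 2 - m₂ ^ 2) / (2 * v))
      = gaussianPDFReal m₁ v x := by
    intro x
    unfold gaussianPDFReal
    have hexp : -(x - m₂) ^ 2 / (2 * (v:ℝ))
        + ((m₁ - m₂) / v * x - (m₁ ^ 2 - m₂ ^ 2) / (2 * v))
        = -(x - m₁) ^ 2 / (2 * (v:ℝ)) := by
      field_simp
      ring
    rw [mul_assoc, ← Real.exp_add, hexp]
  rw [gaussianReal_of_var_ne_zero _ hv, gaussianReal_of_var_ne_zero _ hv,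
    ← withDensity_mul _ (measurable_gaussianPDF _ _) (by fun_prop)]
  congr 1
  funext x
  rw [Pi.mul_apply, gaussianPDF_def, gaussianPDF_def,
    ← ENNReal.ofReal_mul (gaussianPDFReal_nonneg _ _ _), key x]

lemma withDensity_map_equiv {α β : Type*} [MeasurableSpace α] [MeasurableSpace β]
    (e : α ≃ᵐ β) (μ : Measure α) (f : β → ℝ≥0∞) (hf : Measurable f) :
    (μ.withDensity (fun a => f (e a))).map e = (μ.map e).withDensity f := by
  refine Measure.ext fun s hs => ?_
  rw [Measure.map_apply e.measurable hs, withDensity_apply _ (e.measurable hs),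
    withDensity_apply _ hs, Measure.restrict_map e.measurable hs,
    lintegral_map hf e.measurable]

lemma withDensity_prod_withDensity {α β : Type*} [MeasurableSpace α] [MeasurableSpace β]
    (μ : Measure α) (ν : Measure β) [SigmaFinite μ] [SigmaFinite ν]
    {f : α → ℝ≥0∞} {g : β → ℝ≥0∞} (hf : Measurable f) (hg : Measurable g)
    [SigmaFinite (μ.withDensity f)] [SigmaFinite (ν.withDensity g)] :
    (μ.withDensity f).prod (ν.withDensity g)
      = (μ.prod ν).withDensity (fun p => f p.1 * g p.2) := by
  refine Measure.prod_eq (μ := μ.withDensity f) (ν := ν.withDensity g)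
    fun s t hs ht => ?_
  rw [withDensity_apply _ (hs.prod ht), ← Measure.prod_restrict,
    lintegral_prod_mul hf.aemeasurable hg.aemeasurable,
    withDensity_apply _ hs, withDensity_apply _ ht]

set_option maxHeartbeats 1000000 in
lemma pi_withDensity : ∀ (d : ℕ) (μ ν : Fin d → Measure ℝ),
    (∀ i, IsProbabilityMeasure (μ i)) → (∀ i, IsProbabilityMeasure (ν i)) →
    ∀ (f : Fin d → ℝ → ℝ≥0∞), (∀ i, Measurable (f i)) →
    (∀ i, (ν i).withDensity (f i) = μ i) →
    Measure.pi μ = (Measure.pi ν).withDensity (fun z => ∏ i, f i (z i)) := by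
  intro d
  induction d with
  | zero =>
    intro μ ν hμ hν f hf hfd
    rw [Measure.pi_of_empty _ (fun _ => (0:ℝ)), Measure.pi_of_empty _ (fun _ => (0:ℝ))]
    have h1 : (fun z : Fin 0 → ℝ => ∏ i, f i (z i)) = (1 : (Fin 0 → ℝ) → ℝ≥0∞) := by
      funext z; simp
    rw [h1, withDensity_one]
  | succ n ih =>
    intro μ ν hμ hν f hf hfd
    haveI := fun i => hμ i
    haveI := fun i => hν i
    set e := MeasurableEquiv.piFinSuccAbove (fun _ : Fin (n+1) => ℝ) 0 with he
    have mpμ := (measurePreserving_piFinSuccAbove μ 0).symm e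
    have mpν := (measurePreserving_piFinSuccAbove ν 0).symm e
    set ρt : (Fin n → ℝ) → ℝ≥0∞ :=
      fun w => ∏ j, f ((0 : Fin (n+1)).succAbove j) (w j) with hρt
    have hih := ih (fun j => μ ((0 : Fin (n+1)).succAbove j))
      (fun j => ν ((0 : Fin (n+1)).succAbove j)) (fun j => hμ _) (fun j => hν _)
      (fun j => f ((0 : Fin (n+1)).succAbove j)) (fun j => hf _) (fun j => hfd _)
    haveI : SigmaFinite ((ν 0).withDensity (f 0)) := by
      rw [hfd 0]; infer_instance
    haveI : SigmaFinite ((Measure.pi fun j => ν ((0 : Fin (n+1)).succAbove j)).withDensity ρt) := by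
      rw [← hih]; infer_instance
    have hmρt : Measurable ρt := by
      apply Finset.measurable_prod
      intro j _
      exact (hf _).comp (measurable_pi_apply j)
    have hG : (fun p : ℝ × (Fin n → ℝ) => f 0 p.1 * ρt p.2)
        = fun p => (fun z : Fin (n+1) → ℝ => ∏ i, f i (z i)) (e.symm p) := by
      funext p
      show f 0 p.1 * ρt p.2 = ∏ i, f i ((e.symm p) i)
      rw [Fin.prod_univ_succAbove (fun i => f i ((e.symm p) i)) 0]
      have h0 : (e.symm p) 0 = p.1 := by
        simp [he, MeasurableEquiv.piFinSuccAbove_symm_apply]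
      have hsj : ∀ j, (e.symm p) ((0 : Fin (n+1)).succAbove j) = p.2 j := by
        intro j
        simp [he, MeasurableEquiv.piFinSuccAbove_symm_apply]
      rw [h0]
      exact congrArg _ (Finset.prod_congr rfl fun j _ => by rw [hsj j])
    calc Measure.pi μ
        = ((μ 0).prod (Measure.pi fun j => μ ((0 : Fin (n+1)).succAbove j))).map e.symm :=
          mpμ.map_eq.symm
      _ = (((ν 0).withDensity (f 0)).prod
            ((Measure.pi fun j => ν ((0 : Fin (n+1)).succAbove j)).withDensity ρt)).map e.symm := by
          rw [hfd 0, hih]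
      _ = (((ν 0).prod (Measure.pi fun j => ν ((0 : Fin (n+1)).succAbove j))).withDensity
            (fun p => f 0 p.1 * ρt p.2)).map e.symm := by
          rw [withDensity_prod_withDensity _ _ (hf 0) hmρt]
      _ = (Measure.pi ν).withDensity (fun z => ∏ i, f i (z i)) := by
          have hmap := withDensity_map_equiv e.symm
            ((ν 0).prod (Measure.pi fun j => ν ((0 : Fin (n+1)).succAbove j)))
            (fun z => ∏ i, f i (z i)) (by
              apply Finset.measurable_prod
              intro i _
              exact (hf i).comp (measurable_pi_apply i))
          rw [hG, hmap, mpν.map_eq]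

lemma hockey_stick {α : Type*} [MeasurableSpace α] (Q : Measure α) [IsFiniteMeasure Q]
    (ρ : α → ℝ≥0∞) (k : ℝ≥0∞)
    (A : Set α) (hA : MeasurableSet A)
    (hge : ∀ x ∈ A, k ≤ ρ x) (hle : ∀ x ∉ A, ρ x ≤ k)
    (hρ : Measurable ρ)
    (E : Set α) (hE : MeasurableSet E) :
    Q.withDensity ρ E + k * Q A ≤ k * Q E + Q.withDensity ρ A := by
  rw [withDensity_apply _ hE, withDensity_apply _ hA]
  have hsplitE : ∫⁻ x in E, ρ x ∂Q
      = ∫⁻ x in E ∩ A, ρ x ∂Q + ∫⁻ x in E \ A, ρ x ∂Q :=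
    (lintegral_inter_add_diff ρ E hA).symm
  have hsplitA : ∫⁻ x in A, ρ x ∂Q
      = ∫⁻ x in E ∩ A, ρ x ∂Q + ∫⁻ x in A \ E, ρ x ∂Q := by
    rw [← lintegral_inter_add_diff ρ A hE, Set.inter_comm A E]
  have hmE : Q E = Q (E ∩ A) + Q (E \ A) := (measure_inter_add_diff E hA).symm
  have hmA : Q A = Q (E ∩ A) + Q (A \ E) := by
    rw [← measure_inter_add_diff A hE, Set.inter_comm A E]
  have h1 : ∫⁻ x in E \ A, ρ x ∂Q ≤ k * Q (E \ A) := by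
    rw [← setLIntegral_const]
    exact setLIntegral_mono measurable_const fun x hx => hle x hx.2
  have h2 : k * Q (A \ E) ≤ ∫⁻ x in A \ E, ρ x ∂Q := by
    rw [← setLIntegral_const]
    exact setLIntegral_mono hρ fun x hx => hge x hx.1
  calc ∫⁻ x in E, ρ x ∂Q + k * Q A
      = (∫⁻ x in E ∩ A, ρ x ∂Q + k * Q (E ∩ A))
        + (∫⁻ x in E \ A, ρ x ∂Q + k * Q (A \ E)) := by
        rw [hsplitE, hmA]; ring
    _ ≤ (∫⁻ x in E ∩ A, ρ x ∂Q + k * Q (E ∩ A))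
        + (k * Q (E \ A) + ∫⁻ x in A \ E, ρ x ∂Q) := by
        exact add_le_add_right (add_le_add h1 h2) _
    _ = k * Q E + ∫⁻ x in A, ρ x ∂Q := by
        rw [hsplitA, hmE]; ring

lemma gaussianReal_apply_Ici (m : ℝ) (v : ℝ≥0) (hv : v ≠ 0) (t : ℝ) :
    gaussianReal m v (Set.Ici t) = ENNReal.ofReal (stdNormalCDF ((m - t) / Real.sqrt v)) := by
  have hvpos : (0:ℝ) < v := lt_of_le_of_ne v.coe_nonneg (by exact_mod_cast (Ne.symm hv))
  have hσ : (0:ℝ) < Real.sqrt v := Real.sqrt_pos.mpr hvpos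
  have h1 : ((gaussianReal 0 1).map (fun x => Real.sqrt v * x)).map (fun x => x + m)
      = gaussianReal m v := by
    rw [gaussianReal_map_const_mul, gaussianReal_map_add_const]
    congr 1
    · simp
    · ext
      push_cast
      rw [mul_one, Real.sq_sqrt v.coe_nonneg]
  rw [← h1, Measure.map_apply (by fun_prop) measurableSet_Ici]
  have h2 : (fun x : ℝ => x + m) ⁻¹' Set.Ici t = Set.Ici (t - m) := by
    ext x; simp [Set.mem_Ici, sub_le_iff_le_add]
  rw [h2, Measure.map_apply (by fun_prop) measurableSet_Ici]
  have h3 : (fun x : ℝ => Real.sqrt v * x) ⁻¹' Set.Ici (t - m)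
      = Set.Ici ((t - m) / Real.sqrt v) := by
    ext x
    simp only [Set.mem_preimage, Set.mem_Ici]
    rw [div_le_iff₀ hσ, mul_comm]
  rw [h3]
  have hneg : (gaussianReal 0 1).map (fun x => (-1:ℝ) * x) = gaussianReal 0 1 := by
    rw [gaussianReal_map_const_mul]
    have h5 : ((NNReal.mk ((-1:ℝ)^2) (sq_nonneg _) * 1 : ℝ≥0) : ℝ≥0) = 1 := by
      ext; push_cast; norm_num
    rw [h5]
    norm_num
  have h4 : gaussianReal 0 1 (Set.Ici ((t - m) / Real.sqrt v))
      = gaussianReal 0 1 (Set.Iic ((m - t) / Real.sqrt v)) := by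
    conv_lhs => rw [← hneg]
    rw [Measure.map_apply (by fun_prop) measurableSet_Ici]
    congr 1
    ext x
    simp only [Set.mem_preimage, Set.mem_Ici, Set.mem_Iic]
    have hsym : (m - t) / Real.sqrt v = -((t - m) / Real.sqrt v) := by ring
    constructor <;> intro h <;> [skip; skip] <;> rw [hsym] at * <;> linarith
  rw [h4, stdNormalCDF, ENNReal.ofReal_toReal (measure_ne_top _ _)]

lemma gaussian_ldp_base (μ ε : ℝ) (hμ : 0 < μ) (hε : 0 < ε) (V : ℝ≥0) (hV : V ≠ 0) (t₀ : ℝ)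
    (F : Set ℝ) (hF : MeasurableSet F) :
    gaussianReal (t₀ + μ * Real.sqrt V) V F
      ≤ ENNReal.ofReal (Real.exp ε) * gaussianReal t₀ V F
        + ENNReal.ofReal (stdNormalCDF (-ε / μ + μ / 2)
            - Real.exp ε * stdNormalCDF (-ε / μ - μ / 2)) := by
  have hvpos : (0:ℝ) < V := lt_of_le_of_ne V.coe_nonneg (by exact_mod_cast (Ne.symm hV))
  set σ : ℝ := Real.sqrt V with hσdef
  have hσ : 0 < σ := Real.sqrt_pos.mpr hvpos
  have hV' : (V:ℝ) = σ ^ 2 := (Real.sq_sqrt V.coe_nonneg).symm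
  set m₁ : ℝ := t₀ + μ * σ with hm₁
  set ρ : ℝ → ℝ≥0∞ := fun x =>
    ENNReal.ofReal (Real.exp ((m₁ - t₀) / V * x - (m₁ ^ 2 - t₀ ^ 2) / (2 * V))) with hρdef
  have hd : gaussianReal m₁ V = (gaussianReal t₀ V).withDensity ρ :=
    gaussianReal_eq_withDensity m₁ t₀ V hV
  set x₀ : ℝ := t₀ + ε * σ / μ + μ * σ / 2 with hx₀
  have hlin : ∀ x : ℝ, (m₁ - t₀) / V * x - (m₁ ^ 2 - t₀ ^ 2) / (2 * V)
      = μ / σ * (x - x₀) + ε := by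
    intro x
    rw [hV', hm₁, hx₀]
    field_simp
    ring
  set k : ℝ≥0∞ := ENNReal.ofReal (Real.exp ε) with hk
  have hge : ∀ x ∈ Set.Ici x₀, k ≤ ρ x := by
    intro x hx
    apply ENNReal.ofReal_le_ofReal
    apply Real.exp_le_exp.mpr
    rw [hlin x]
    have : 0 ≤ μ / σ * (x - x₀) := by
      apply mul_nonneg (le_of_lt (div_pos hμ hσ))
      simpa [sub_nonneg] using hx
    linarith
  have hle : ∀ x ∉ Set.Ici x₀, ρ x ≤ k := by
    intro x hx
    apply ENNReal.ofReal_le_ofReal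
    apply Real.exp_le_exp.mpr
    rw [hlin x]
    have hxlt : x < x₀ := by simpa [Set.mem_Ici, not_le] using hx
    nlinarith [mul_pos (div_pos hμ hσ) (sub_pos.mpr hxlt)]
  have hhs := hockey_stick (gaussianReal t₀ V) ρ k (Set.Ici x₀) measurableSet_Ici
    hge hle (by fun_prop) F hF
  rw [← hd] at hhs
  have hPA : gaussianReal m₁ V (Set.Ici x₀)
      = ENNReal.ofReal (stdNormalCDF (-ε / μ + μ / 2)) := by
    rw [gaussianReal_apply_Ici _ _ hV]
    congr 2
    rw [hm₁, hx₀, ← hσdef]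
    field_simp
    ring
  have hQA : gaussianReal t₀ V (Set.Ici x₀)
      = ENNReal.ofReal (stdNormalCDF (-ε / μ - μ / 2)) := by
    rw [gaussianReal_apply_Ici _ _ hV]
    congr 2
    rw [hx₀, ← hσdef]
    field_simp
    ring
  set δ : ℝ := stdNormalCDF (-ε / μ + μ / 2) - Real.exp ε * stdNormalCDF (-ε / μ - μ / 2)
    with hδ
  have hPA' : gaussianReal m₁ V (Set.Ici x₀)
      ≤ ENNReal.ofReal δ + k * gaussianReal t₀ V (Set.Ici x₀) := by
    rw [hPA, hQA]
    calc ENNReal.ofReal (stdNormalCDF (-ε / μ + μ / 2))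
        = ENNReal.ofReal (δ + Real.exp ε * stdNormalCDF (-ε / μ - μ / 2)) := by
          rw [hδ]; ring_nf
      _ ≤ ENNReal.ofReal δ + ENNReal.ofReal (Real.exp ε * stdNormalCDF (-ε / μ - μ / 2)) :=
          ENNReal.ofReal_add_le
      _ = ENNReal.ofReal δ + k * ENNReal.ofReal (stdNormalCDF (-ε / μ - μ / 2)) := by
          rw [hk, ← ENNReal.ofReal_mul (Real.exp_nonneg ε)]
  have hchain : gaussianReal m₁ V F + k * gaussianReal t₀ V (Set.Ici x₀)
      ≤ (k * gaussianReal t₀ V F + ENNReal.ofReal δ)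
        + k * gaussianReal t₀ V (Set.Ici x₀) := by
    calc gaussianReal m₁ V F + k * gaussianReal t₀ V (Set.Ici x₀)
        ≤ k * gaussianReal t₀ V F + gaussianReal m₁ V (Set.Ici x₀) := hhs
      _ ≤ k * gaussianReal t₀ V F
          + (ENNReal.ofReal δ + k * gaussianReal t₀ V (Set.Ici x₀)) := add_le_add_right hPA' _
      _ = (k * gaussianReal t₀ V F + ENNReal.ofReal δ)
          + k * gaussianReal t₀ V (Set.Ici x₀) := by ring
  have hfin : k * gaussianReal t₀ V (Set.Ici x₀) ≠ ⊤ :=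
    ENNReal.mul_ne_top ENNReal.ofReal_ne_top (measure_ne_top _ _)
  exact (ENNReal.add_le_add_iff_right hfin).mp hchain

lemma gaussian_ldp_dist (μ ε : ℝ) (hμ : 0 < μ) (hε : 0 < ε) (V : ℝ≥0) (hV : V ≠ 0)
    (m₁ m₂ : ℝ) (hdist : (m₁ - m₂) ^ 2 ≤ μ ^ 2 * V)
    (F : Set ℝ) (hF : MeasurableSet F) :
    gaussianReal m₁ V F ≤ ENNReal.ofReal (Real.exp ε) * gaussianReal m₂ V F
      + ENNReal.ofReal (stdNormalCDF (-ε / μ + μ / 2)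
          - Real.exp ε * stdNormalCDF (-ε / μ - μ / 2)) := by
  have hvpos : (0:ℝ) < V := lt_of_le_of_ne V.coe_nonneg (by exact_mod_cast (Ne.symm hV))
  set σ : ℝ := Real.sqrt V with hσdef
  have hσ : 0 < σ := Real.sqrt_pos.mpr hvpos
  have hV' : (V:ℝ) = σ ^ 2 := (Real.sq_sqrt V.coe_nonneg).symm
  set r : ℝ := (m₁ - m₂) / (μ * σ) with hr
  have hr2 : r ^ 2 ≤ 1 := by
    rw [hr, div_pow]
    rw [div_le_one (by positivity)]
    calc (m₁ - m₂) ^ 2 ≤ μ ^ 2 * V := hdist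
      _ = (μ * σ) ^ 2 := by rw [hV']; ring
  have hrmul : r * (μ * σ) = m₁ - m₂ := by
    rw [hr]; field_simp
  have hrle : (NNReal.mk (r ^ 2) (sq_nonneg r) * V : ℝ≥0) ≤ V := by
    apply mul_le_of_le_one_left (by positivity)
    rw [← NNReal.coe_le_coe]
    exact_mod_cast hr2
  set v₂ : ℝ≥0 := V - NNReal.mk (r ^ 2) (sq_nonneg r) * V with hv₂
  have hvsum : v₂ + (NNReal.mk (r ^ 2) (sq_nonneg r) * V : ℝ≥0) = V := by
    rw [hv₂]
    exact tsub_add_cancel_of_le hrle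
  have h₁ : ((gaussianReal m₂ v₂).prod (gaussianReal (μ * σ) V)).map
      (fun p => p.1 + r * p.2) = gaussianReal m₁ V := by
    have h := map_add_map_gaussianReal (gaussianReal m₂ v₂) (gaussianReal (μ * σ) V)
      measurable_id (measurable_id.const_mul r) Measure.map_id (gaussianReal_map_const_mul r)
    simp only [id_eq] at h
    rw [h, hvsum]
    congr 1
    rw [hrmul]; ring
  have h₂ : ((gaussianReal m₂ v₂).prod (gaussianReal 0 V)).map
      (fun p => p.1 + r * p.2) = gaussianReal m₂ V := by
    have h := map_add_map_gaussianReal (gaussianReal m₂ v₂) (gaussianReal 0 V)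
      measurable_id (measurable_id.const_mul r) Measure.map_id (gaussianReal_map_const_mul r)
    simp only [id_eq] at h
    rw [h, hvsum]
    congr 1
    ring
  have hTmeas : Measurable fun p : ℝ × ℝ => p.1 + r * p.2 := by fun_prop
  have hpre : MeasurableSet ((fun p : ℝ × ℝ => p.1 + r * p.2) ⁻¹' F) := hTmeas hF
  rw [← h₁, ← h₂, Measure.map_apply hTmeas hF, Measure.map_apply hTmeas hF,
    Measure.prod_apply hpre, Measure.prod_apply hpre]
  set k : ℝ≥0∞ := ENNReal.ofReal (Real.exp ε) with hk
  set δ : ℝ := stdNormalCDF (-ε / μ + μ / 2) - Real.exp ε * stdNormalCDF (-ε / μ - μ / 2)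
    with hδ
  have hbound : ∀ w : ℝ,
      gaussianReal (μ * σ) V (Prod.mk w ⁻¹' ((fun p : ℝ × ℝ => p.1 + r * p.2) ⁻¹' F))
        ≤ k * gaussianReal 0 V (Prod.mk w ⁻¹' ((fun p : ℝ × ℝ => p.1 + r * p.2) ⁻¹' F))
          + ENNReal.ofReal δ := by
    intro w
    have hsec : MeasurableSet (Prod.mk w ⁻¹' ((fun p : ℝ × ℝ => p.1 + r * p.2) ⁻¹' F)) :=
      measurable_prodMk_left hpre
    have := gaussian_ldp_base μ ε hμ hε V hV 0 _ hsec
    rwa [zero_add] at this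
  have hQmeas : Measurable fun w : ℝ =>
      gaussianReal 0 V (Prod.mk w ⁻¹' ((fun p : ℝ × ℝ => p.1 + r * p.2) ⁻¹' F)) :=
    measurable_measure_prodMk_left hpre
  calc ∫⁻ w, gaussianReal (μ * σ) V
        (Prod.mk w ⁻¹' ((fun p : ℝ × ℝ => p.1 + r * p.2) ⁻¹' F)) ∂(gaussianReal m₂ v₂)
      ≤ ∫⁻ w, (k * gaussianReal 0 V
          (Prod.mk w ⁻¹' ((fun p : ℝ × ℝ => p.1 + r * p.2) ⁻¹' F))
          + ENNReal.ofReal δ) ∂(gaussianReal m₂ v₂) := lintegral_mono hbound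
    _ = k * ∫⁻ w, gaussianReal 0 V
          (Prod.mk w ⁻¹' ((fun p : ℝ × ℝ => p.1 + r * p.2) ⁻¹' F)) ∂(gaussianReal m₂ v₂)
          + ENNReal.ofReal δ := by
        rw [lintegral_add_right _ measurable_const, lintegral_const_mul _ hQmeas,
          lintegral_const, measure_univ, mul_one]


/-- **Gaussian differential privacy duality for the Gaussian mechanism.**
If `f : 𝒳 → ℝ^d` has `ℓ₂`-sensitivity at most `Δ`, `μ > 0`, and
`M x = law of f x + Z` with `Z ∼ N(0, (Δ/μ)² I_d)` (the `μ`-GDP mechanism),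
then for every `ε > 0` the mechanism `M` satisfies `(ε, δ_μ(ε))`-LDP, where
`δ_μ(ε) = Φ(−ε/μ + μ/2) − e^ε Φ(−ε/μ − μ/2)`. -/
theorem gdp_mechanism_ldp {d : ℕ} {𝒳 : Type*} [MeasurableSpace 𝒳]
    (f : 𝒳 → (Fin d → ℝ)) (Δ μ : ℝ) (hΔ : 0 < Δ) (hμ : 0 < μ)
    (hsens : ∀ x x' : 𝒳, Real.sqrt (∑ i, (f x i - f x' i) ^ 2) ≤ Δ)
    (v : NNReal) (hv : (v : ℝ) = (Δ / μ) ^ 2)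
    (ε : ℝ) (hε : 0 < ε) :
    ∀ x x' : 𝒳, ∀ E : Set (Fin d → ℝ), MeasurableSet E →
      gaussianMechanism f v x E ≤
        ENNReal.ofReal (Real.exp ε) * gaussianMechanism f v x' E
          + ENNReal.ofReal
              (stdNormalCDF (-ε / μ + μ / 2)
                - Real.exp ε * stdNormalCDF (-ε / μ - μ / 2)) := by
  intro x x' E hE
  have hvpos : (0:ℝ) < v := by
    rw [hv]; positivity
  have hvne : v ≠ 0 := by
    intro h
    rw [h] at hvpos
    simp at hvpos
  have hmech : ∀ y : 𝒳, gaussianMechanism f v y = Measure.pi fun i => gaussianReal (f y i) v :=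
    fun y => pi_gaussianReal_map_add d v (f y)
  rw [hmech x, hmech x']
  set k : ℝ≥0∞ := ENNReal.ofReal (Real.exp ε) with hk
  by_cases hab : f x = f x'
  · rw [hab]
    have h1 : (1:ℝ≥0∞) ≤ k := by
      rw [hk, ← ENNReal.ofReal_one]
      exact ENNReal.ofReal_le_ofReal (Real.one_le_exp hε.le)
    calc (Measure.pi fun i => gaussianReal (f x' i) v) E
        = 1 * (Measure.pi fun i => gaussianReal (f x' i) v) E := (one_mul _).symm
      _ ≤ k * (Measure.pi fun i => gaussianReal (f x' i) v) E := mul_le_mul_left h1 _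
      _ ≤ _ := le_self_add
  · -- nontrivial case
    set s2 : ℝ := ∑ i, (f x i - f x' i) ^ 2 with hs2
    have hs2pos : 0 < s2 := by
      have hex : ∃ i, f x i - f x' i ≠ 0 := by
        by_contra h
        push_neg at h
        exact hab (funext fun i => sub_eq_zero.mp (h i))
      obtain ⟨i, hi⟩ := hex
      exact Finset.sum_pos' (fun j _ => sq_nonneg _)
        ⟨i, Finset.mem_univ i, by positivity⟩
    have hs2le : s2 ≤ Δ ^ 2 := by
      have h := hsens x x'
      nlinarith [Real.sq_sqrt (le_of_lt hs2pos), Real.sqrt_nonneg s2]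
    -- relative density
    have hdens : Measure.pi (fun i => gaussianReal (f x i) v)
        = (Measure.pi fun i => gaussianReal (f x' i) v).withDensity
          (fun z => ∏ i, ENNReal.ofReal (Real.exp
            ((f x i - f x' i) / v * z i - ((f x i) ^ 2 - (f x' i) ^ 2) / (2 * v)))) :=
      pi_withDensity d _ _ (fun i => inferInstance) (fun i => inferInstance)
        (fun i t => ENNReal.ofReal (Real.exp
          ((f x i - f x' i) / v * t - ((f x i) ^ 2 - (f x' i) ^ 2) / (2 * v))))
        (fun i => by fun_prop)
        (fun i => (gaussianReal_eq_withDensity (f x i) (f x' i) v hvne).symm)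
    set κ : ℝ := ∑ i, ((f x i) ^ 2 - (f x' i) ^ 2) / (2 * (v:ℝ)) with hκ
    set T : (Fin d → ℝ) → ℝ := fun z => ∑ i, (f x i - f x' i) / (v:ℝ) * z i with hT
    have hTmeas : Measurable T := by
      apply Finset.measurable_sum
      intro i _
      exact (measurable_pi_apply i).const_mul _
    set A : Set (Fin d → ℝ) := T ⁻¹' (Set.Ici (ε + κ)) with hAdef
    have hA : MeasurableSet A := hTmeas measurableSet_Ici
    have hρT : ∀ z, (∏ i, ENNReal.ofReal (Real.exp
        ((f x i - f x' i) / v * z i - ((f x i) ^ 2 - (f x' i) ^ 2) / (2 * v))))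
        = ENNReal.ofReal (Real.exp (T z - κ)) := by
      intro z
      rw [← ENNReal.ofReal_prod_of_nonneg (fun i _ => Real.exp_nonneg _), ← Real.exp_sum]
      congr 2
      rw [hT, hκ, Finset.sum_sub_distrib]
    have hge : ∀ z ∈ A, k ≤ (∏ i, ENNReal.ofReal (Real.exp
        ((f x i - f x' i) / v * z i - ((f x i) ^ 2 - (f x' i) ^ 2) / (2 * v)))) := by
      intro z hz
      rw [hρT z, hk]
      apply ENNReal.ofReal_le_ofReal
      apply Real.exp_le_exp.mpr
      have : ε + κ ≤ T z := hz
      linarith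
    have hle : ∀ z ∉ A, (∏ i, ENNReal.ofReal (Real.exp
        ((f x i - f x' i) / v * z i - ((f x i) ^ 2 - (f x' i) ^ 2) / (2 * v)))) ≤ k := by
      intro z hz
      rw [hρT z, hk]
      apply ENNReal.ofReal_le_ofReal
      apply Real.exp_le_exp.mpr
      have : ¬ (ε + κ ≤ T z) := hz
      push_neg at this
      linarith
    have hρmeas : Measurable (fun z : Fin d → ℝ => ∏ i, ENNReal.ofReal (Real.exp
        ((f x i - f x' i) / v * z i - ((f x i) ^ 2 - (f x' i) ^ 2) / (2 * v)))) := by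
      apply Finset.measurable_prod
      intro i _
      apply Measurable.ennreal_ofReal
      apply Real.measurable_exp.comp
      exact ((measurable_pi_apply i).const_mul _).sub measurable_const
    have hhs := hockey_stick (Measure.pi fun i => gaussianReal (f x' i) v) _ k A hA hge hle
      hρmeas E hE
    rw [← hdens] at hhs
    -- pushforward evaluation
    have hmapP := pi_gaussianReal_map_sum d (fun i => f x i)
      (fun i => (f x i - f x' i) / (v:ℝ)) v
    have hmapQ := pi_gaussianReal_map_sum d (fun i => f x' i)
      (fun i => (f x i - f x' i) / (v:ℝ)) v
    set W : ℝ≥0 := ∑ i, (NNReal.mk (((f x i - f x' i) / (v:ℝ)) ^ 2) (sq_nonneg _) * v : ℝ≥0) with hW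
    set M₁ : ℝ := ∑ i, (f x i - f x' i) / (v:ℝ) * f x i with hM₁
    set M₂ : ℝ := ∑ i, (f x i - f x' i) / (v:ℝ) * f x' i with hM₂
    have hvne' : (v:ℝ) ≠ 0 := ne_of_gt hvpos
    have hWcoe : (W:ℝ) = s2 / v := by
      rw [hW, hs2, NNReal.coe_sum, Finset.sum_div]
      refine Finset.sum_congr rfl fun i _ => ?_
      push_cast
      field_simp
    have hWne : W ≠ 0 := by
      intro h
      have h0 : (W:ℝ) = 0 := by rw [h]; simp
      rw [hWcoe] at h0
      have := div_pos hs2pos hvpos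
      linarith
    have hMdiff : M₁ - M₂ = s2 / v := by
      rw [hM₁, hM₂, hs2, ← Finset.sum_sub_distrib, Finset.sum_div]
      refine Finset.sum_congr rfl fun i _ => ?_
      field_simp
    have hdist : (M₁ - M₂) ^ 2 ≤ μ ^ 2 * W := by
      rw [hMdiff, hWcoe]
      have hule : s2 / (v:ℝ) ≤ μ ^ 2 := by
        rw [div_le_iff₀ hvpos, hv]
        calc s2 ≤ Δ ^ 2 := hs2le
          _ = μ ^ 2 * (Δ / μ) ^ 2 := by field_simp
      have hupos : 0 < s2 / (v:ℝ) := div_pos hs2pos hvpos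
      nlinarith [hupos, hule]
    have hPA : Measure.pi (fun i => gaussianReal (f x i) v) A
        = gaussianReal M₁ W (Set.Ici (ε + κ)) := by
      rw [hAdef, ← Measure.map_apply hTmeas measurableSet_Ici, hmapP]
    have hQA : Measure.pi (fun i => gaussianReal (f x' i) v) A
        = gaussianReal M₂ W (Set.Ici (ε + κ)) := by
      rw [hAdef, ← Measure.map_apply hTmeas measurableSet_Ici, hmapQ]
    have happ := gaussian_ldp_dist μ ε hμ hε W hWne M₁ M₂ hdist
      (Set.Ici (ε + κ)) measurableSet_Ici
    have hPA' : Measure.pi (fun i => gaussianReal (f x i) v) A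
        ≤ k * Measure.pi (fun i => gaussianReal (f x' i) v) A
          + ENNReal.ofReal (stdNormalCDF (-ε / μ + μ / 2)
              - Real.exp ε * stdNormalCDF (-ε / μ - μ / 2)) := by
      rw [hPA, hQA]
      exact happ
    have hfin : k * Measure.pi (fun i => gaussianReal (f x' i) v) A ≠ ⊤ :=
      ENNReal.mul_ne_top ENNReal.ofReal_ne_top (measure_ne_top _ _)
    refine (ENNReal.add_le_add_iff_right hfin).mp ?_
    calc Measure.pi (fun i => gaussianReal (f x i) v) E
          + k * Measure.pi (fun i => gaussianReal (f x' i) v) A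
        ≤ k * Measure.pi (fun i => gaussianReal (f x' i) v) E
          + Measure.pi (fun i => gaussianReal (f x i) v) A := hhs
      _ ≤ k * Measure.pi (fun i => gaussianReal (f x' i) v) E
          + (k * Measure.pi (fun i => gaussianReal (f x' i) v) A
            + ENNReal.ofReal (stdNormalCDF (-ε / μ + μ / 2)
                - Real.exp ε * stdNormalCDF (-ε / μ - μ / 2))) := add_le_add_right hPA' _
      _ = (k * Measure.pi (fun i => gaussianReal (f x' i) v) E
          + ENNReal.ofReal (stdNormalCDF (-ε / μ + μ / 2)
              - Real.exp ε * stdNormalCDF (-ε / μ - μ / 2)))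
          + k * Measure.pi (fun i => gaussianReal (f x' i) v) A := by ring

end Auxiliary
end
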